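/- Let ℓ be any index attaining the minimum of the ratios, i.e., u_ℓ = min_i u_i. Then (min_{j ≠ ℓ} v̂_ℓ A_{ℓ,j} v̂_j) · ∑_{j ≠ ℓ} (max_i u_i − u_j) ≤ 2ε · max_i u_i. -/

import Mathlib

open Finset

/-- If `l` attains the minimum of the ratios `u i = v i / v̂ i`, then
`(min_{j ≠ l} v̂_l A_{l,j} v̂_j) · ∑_{j ≠ l} (max_i u_i − u_j) ≤ 2ε · max_i u_i`. -/
theorem min_index_sum_bound
    {n : ℕ} (hn : 3 ≤ n)
    (A : Fin n → Fin n → ℝ)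
    (hA_symm : ∀ i j, A i j = A j i)
    (hA_nonneg : ∀ i j, 0 ≤ A i j)
    (hA_diag : ∀ i, A i i = 0)
    (hA_offdiag : ∀ i j, i ≠ j → 0 < A i j)
    (v : Fin n → ℝ) (hv : ∀ i, 0 < v i)
    (hds : ∀ i, ∑ j, v i * A i j * v j = 1)
    (ε : ℝ) (hε0 : 0 < ε) (hε1 : ε < 1)
    (vh : Fin n → ℝ) (hvh : ∀ i, 0 < vh i)
    (happrox : ∀ i, |∑ j, vh i * A i j * vh j - 1| ≤ ε)
    (l : Fin n) (hl : ∀ i, v l / vh l ≤ v i / vh i) :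
    (Finset.inf' (Finset.univ.filter (fun j : Fin n => j ≠ l))
        ⟨_, Finset.mem_filter.mpr ⟨Finset.mem_univ _,
          (Classical.choose_spec
            (@exists_ne (Fin n) (Fin.nontrivial_iff_two_le.mpr (by omega)) l))⟩⟩
        (fun j => vh l * A l j * vh j)) *
      (∑ j ∈ Finset.univ.filter (fun j : Fin n => j ≠ l),
        (Finset.sup' Finset.univ ⟨⟨0, by omega⟩, Finset.mem_univ _⟩
            (fun i => v i / vh i) - v j / vh j)) ≤
    2 * ε *
      Finset.sup' Finset.univ ⟨⟨0, by omega⟩, Finset.mem_univ _⟩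
        (fun i => v i / vh i) := by
  classical
  have hvh0 : ∀ i, vh i ≠ 0 := fun i => (hvh i).ne'
  set u : Fin n → ℝ := fun i => v i / vh i with hu
  have hu0 : ∀ i, 0 < u i := fun i => div_pos (hv i) (hvh i)
  have hneU : (Finset.univ : Finset (Fin n)).Nonempty := ⟨l, Finset.mem_univ _⟩
  obtain ⟨k, hk⟩ := @exists_ne (Fin n) (Fin.nontrivial_iff_two_le.mpr (by omega)) l
  have hneF : (Finset.univ.filter (fun j : Fin n => j ≠ l)).Nonempty :=
    ⟨k, Finset.mem_filter.mpr ⟨Finset.mem_univ _, hk⟩⟩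
  show (Finset.inf' (Finset.univ.filter (fun j : Fin n => j ≠ l)) hneF
        (fun j => vh l * A l j * vh j)) *
      (∑ j ∈ Finset.univ.filter (fun j : Fin n => j ≠ l),
        (Finset.sup' Finset.univ hneU u - u j)) ≤
    2 * ε * Finset.sup' Finset.univ hneU u
  set M : ℝ := Finset.sup' Finset.univ hneU u with hMdef
  set c : ℝ := Finset.inf' (Finset.univ.filter (fun j : Fin n => j ≠ l)) hneF
        (fun j => vh l * A l j * vh j) with hcdef
  have hMge : ∀ i, u i ≤ M := fun i => Finset.le_sup' u (Finset.mem_univ i)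
  obtain ⟨i0, -, hi0⟩ := Finset.exists_mem_eq_sup' hneU u
  have hMpos : 0 < M := by rw [hMdef, hi0]; exact hu0 i0
  -- rewrite true rows in terms of u
  have hterm : ∀ i j : Fin n, u i * ((vh i * A i j * vh j) * u j) = v i * A i j * v j := by
    intro i j
    simp only [hu]
    field_simp [hvh0 i, hvh0 j]
  have hrow : ∀ i : Fin n, u i * ∑ j, (vh i * A i j * vh j) * u j = 1 := by
    intro i
    rw [Finset.mul_sum]
    simp_rw [hterm]
    exact hds i
  -- splitting off the l term
  have hsplit : ∀ f : Fin n → ℝ, f l = 0 →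
      ∑ j, f j = ∑ j ∈ Finset.univ.filter (fun j : Fin n => j ≠ l), f j := by
    intro f hf
    rw [← Finset.sum_filter_add_sum_filter_not Finset.univ (fun j => j ≠ l)]
    have : ∑ j ∈ Finset.univ.filter (fun j : Fin n => ¬ j ≠ l), f j = 0 := by
      apply Finset.sum_eq_zero
      intro j hj
      simp only [Finset.mem_filter, not_not] at hj
      rw [hj.2, hf]
    rw [this, add_zero]
  set S : ℝ := ∑ j ∈ Finset.univ.filter (fun j : Fin n => j ≠ l), vh l * A l j * vh j with hSdef
  set S' : ℝ := ∑ j ∈ Finset.univ.filter (fun j : Fin n => j ≠ l), (vh l * A l j * vh j) * u j with hS'def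
  have hSfull : ∑ j, vh l * A l j * vh j = S := by
    apply hsplit; rw [hA_diag]; ring
  have hS'full : ∑ j, (vh l * A l j * vh j) * u j = S' := by
    apply hsplit; rw [hA_diag]; ring
  have hS'eq : u l * S' = 1 := by rw [← hS'full]; exact hrow l
  have hSle : S ≤ 1 + ε := by
    have := happrox l
    rw [hSfull, abs_le] at this
    linarith [this.2]
  -- bound via max row
  have hstep5 : M * (u l * (1 - ε)) ≤ 1 := by
    have h1 : 1 - ε ≤ ∑ j, vh i0 * A i0 j * vh j := by
      have := happrox i0
      rw [abs_le] at this
      linarith [this.1]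
    have h2 : u l * ∑ j, vh i0 * A i0 j * vh j ≤ ∑ j, (vh i0 * A i0 j * vh j) * u j := by
      rw [Finset.mul_sum]
      apply Finset.sum_le_sum
      intro j _
      have hb : 0 ≤ vh i0 * A i0 j * vh j :=
        mul_nonneg (mul_nonneg (hvh i0).le (hA_nonneg i0 j)) (hvh j).le
      calc u l * (vh i0 * A i0 j * vh j) = (vh i0 * A i0 j * vh j) * u l := by ring
        _ ≤ (vh i0 * A i0 j * vh j) * u j := mul_le_mul_of_nonneg_left (hl j) hb
    have h3 : M * (u l * (1 - ε)) ≤ M * (u l * ∑ j, vh i0 * A i0 j * vh j) := by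
      apply mul_le_mul_of_nonneg_left _ hMpos.le
      exact mul_le_mul_of_nonneg_left h1 (hu0 l).le
    have h4 : M * (u l * ∑ j, vh i0 * A i0 j * vh j) ≤ M * ∑ j, (vh i0 * A i0 j * vh j) * u j := by
      apply mul_le_mul_of_nonneg_left h2 hMpos.le
    have h5 : M * ∑ j, (vh i0 * A i0 j * vh j) * u j = 1 := by
      rw [hMdef, hi0]; exact hrow i0
    linarith
  have hS'ge : M * (1 - ε) ≤ S' := by
    have h : u l * (M * (1 - ε)) ≤ u l * S' := by
      calc u l * (M * (1 - ε)) = M * (u l * (1 - ε)) := by ring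
        _ ≤ 1 := hstep5
        _ = u l * S' := hS'eq.symm
    exact le_of_mul_le_mul_left h (hu0 l)
  have hstep1 : c * (∑ j ∈ Finset.univ.filter (fun j : Fin n => j ≠ l), (M - u j)) ≤ M * S - S' := by
    have heq : ∑ j ∈ Finset.univ.filter (fun j : Fin n => j ≠ l),
        (vh l * A l j * vh j) * (M - u j) = M * S - S' := by
      rw [hSdef, hS'def, Finset.mul_sum, ← Finset.sum_sub_distrib]
      apply Finset.sum_congr rfl
      intros; ring
    rw [Finset.mul_sum, ← heq]
    apply Finset.sum_le_sum
    intro j hj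
    have hc : c ≤ vh l * A l j * vh j := Finset.inf'_le _ hj
    exact mul_le_mul_of_nonneg_right hc (by linarith [hMge j])
  have hMS : M * S ≤ M * (1 + ε) := mul_le_mul_of_nonneg_left hSle hMpos.le
  nlinarith [hstep1, hMS, hS'ge]
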